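/- Let G be a group containing an element g of infinite order, let N ∈ ℕ, and let X be a G-space containing a point x₀ with g·x₀ = x₀ (for instance, any action of G by homeomorphisms on a Euclidean retract has such a point by Brouwer's fixed point theorem). Then there is no almost G-equivariant sequence of maps f_n : X → Δ^(N)(G); that is, the action of G on X is not N-amenable for any N. -/

import Mathlib

open scoped Pointwise ENNReal
open Filter Topology

noncomputable section

namespace FJ

/-- The set of left cosets of members of a family `F` of subgroups of `G`. -/
def cosets {G : Type} [Group G] (F : Set (Subgroup G)) : Set (Set G) :=
  {A | ∃ (g : G) (H : Subgroup G), H ∈ F ∧ A = g • (H : Set G)}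

/-- Left translation by `g` as a bijection of the set of cosets. -/
def cosetEquiv {G : Type} [Group G] (F : Set (Subgroup G)) (g : G) :
    ↥(cosets F) ≃ ↥(cosets F) where
  toFun A := ⟨g • (A : Set G), by
    obtain ⟨h, H, hH, hA⟩ := A.2
    exact ⟨g * h, H, hH, by rw [hA, smul_smul]⟩⟩
  invFun A := ⟨g⁻¹ • (A : Set G), by
    obtain ⟨h, H, hH, hA⟩ := A.2
    exact ⟨g⁻¹ * h, H, hH, by rw [hA, smul_smul]⟩⟩
  left_inv A := Subtype.ext (inv_smul_smul g (A : Set G))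
  right_inv A := Subtype.ext (smul_inv_smul g (A : Set G))

/-- Reindexing an `ℓ¹`-function along a bijection of the index set. -/
def lpT {ι : Type} (e : ι ≃ ι) (p : lp (fun _ : ι => ℝ) 1) : lp (fun _ : ι => ℝ) 1 :=
  ⟨fun i => p (e i), by
    have h1 : Summable fun i : ι => ‖p i‖ ^ ((1 : ℝ≥0∞).toReal) :=
      (lp.memℓp p).summable (by norm_num)
    exact memℓp_gen (e.summable_iff.2 h1)⟩

@[simp] theorem lpT_apply {ι : Type} (e : ι ≃ ι) (p : lp (fun _ : ι => ℝ) 1) (i : ι) :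
    lpT e p i = p (e i) := rfl

/-- The `N`-skeleton of the full simplex on the index set `ι`, inside `ℓ¹(ι)`:
finitely supported probability measures whose support has at most `N + 1` points. -/
def stdSimplex (ι : Type) (N : ℕ) : Set (lp (fun _ : ι => ℝ) 1) :=
  {p | (∀ i, 0 ≤ p i) ∧ {i | p i ≠ 0}.Finite ∧ {i | p i ≠ 0}.ncard ≤ N + 1 ∧ ∑' i, p i = 1}

/-- Reindexing preserves the simplex. -/
def simT {ι : Type} {N : ℕ} (e : ι ≃ ι) (q : ↥(stdSimplex ι N)) : ↥(stdSimplex ι N) := by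
  refine ⟨lpT e q.1, ?_, ?_, ?_, ?_⟩
  · exact fun i => q.2.1 (e i)
  · have : {i | (lpT e q.1) i ≠ 0} = e ⁻¹' {i | (q.1 : ∀ _ : ι, ℝ) i ≠ 0} := rfl
    rw [this]
    exact q.2.2.1.preimage e.injective.injOn
  · have h1 : {i | (lpT e q.1) i ≠ 0} = e.symm '' {i | (q.1 : ∀ _ : ι, ℝ) i ≠ 0} := by
      rw [Equiv.image_eq_preimage_symm]; rfl
    rw [h1, Set.ncard_image_of_injective _ e.symm.injective]
    exact q.2.2.2.1
  · have := q.2.2.2.2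
    calc ∑' i, (lpT e q.1) i = ∑' i, q.1 (e i) := rfl
    _ = ∑' i, q.1 i := e.tsum_eq _
    _ = 1 := this

/-- The isometric action of `G` on the simplex `Δ_F^{(N)}(G)`: `(g • p) A = p (g⁻¹ • A)`. -/
def simSMulF {G : Type} [Group G] (F : Set (Subgroup G)) (N : ℕ) (g : G) :
    ↥(stdSimplex ↥(cosets F) N) → ↥(stdSimplex ↥(cosets F) N) :=
  simT (cosetEquiv F g⁻¹)

/-- The isometric action of `G` on the simplex `Δ^{(N)}(G)` by left translation:
`(g • p) h = p (g⁻¹ * h)`. -/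
def simSMulG {G : Type} [Group G] (N : ℕ) (g : G) :
    ↥(stdSimplex G N) → ↥(stdSimplex G N) :=
  simT (Equiv.mulLeft g⁻¹)

end FJ

/-- If `G` contains an element `g₀` of infinite order and `X` is a `G`-space containing a
point `x₀` fixed by `g₀` (for instance, by Brouwer's fixed point theorem, any `G`-action by
homeomorphisms on a Euclidean retract has such a point), then there is no almost
`G`-equivariant sequence of maps `X → Δ^{(N)}(G)`: the action of `G` on `X` is not
`N`-amenable for any `N`. -/
theorem not_N_amenable_of_fixed_point
    {G : Type} [Group G] (g₀ : G) (hg : ∀ k : ℤ, g₀ ^ k = 1 → k = 0) (N : ℕ)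
    {X : Type} [MulAction G X] (x₀ : X) (hx₀ : g₀ • x₀ = x₀) :
    ¬ ∃ f : ℕ → X → ↥(FJ.stdSimplex G N),
        ∀ g : G, ∀ ε > (0 : ℝ), ∃ n₀ : ℕ, ∀ n ≥ n₀, ∀ x : X,
          dist (f n (g • x)) (FJ.simSMulG N g (f n x)) < ε := by
  classical
  rintro ⟨f, hf⟩
  -- powers of g₀ fix x₀
  have hfix : ∀ j : ℕ, (g₀ ^ j) • x₀ = x₀ := by
    intro j
    induction j with
    | zero => simp
    | succ k ih => rw [pow_succ, mul_smul, hx₀, ih]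
  -- injectivity of natural powers
  have hinj : Function.Injective (fun j : ℕ => g₀ ^ j) := by
    intro a b hab
    simp only at hab
    have h1 : g₀ ^ ((a : ℤ) - (b : ℤ)) = 1 := by
      rw [zpow_sub, zpow_natCast, zpow_natCast, hab, mul_inv_cancel]
    have := hg _ h1
    omega
  set M : ℕ := (N + 1) ^ 2 + 1 with hM
  -- choose n₀ for each power with ε = 1/2
  have key : ∀ j : ℕ, ∃ n₀ : ℕ, ∀ n ≥ n₀, ∀ x : X,
      dist (f n ((g₀ ^ j) • x)) (FJ.simSMulG N (g₀ ^ j) (f n x)) < 1/2 :=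
    fun j => hf (g₀ ^ j) (1/2) (by norm_num)
  choose n₀ hn₀ using key
  set n : ℕ := (Finset.Icc 1 M).sup n₀ with hn
  set p : ↥(FJ.stdSimplex G N) := f n x₀ with hpdef
  obtain ⟨hpos, hfin, hcard, hsum⟩ := p.2
  set Sf : Finset G := hfin.toFinset with hSf
  have hSfmem : ∀ h : G, h ∈ Sf ↔ (p.1 : ∀ _ : G, ℝ) h ≠ 0 := by
    intro h; simp [hSf, Set.Finite.mem_toFinset]
  have hSfcard : Sf.card ≤ N + 1 := by
    rwa [← Set.ncard_coe_finset, hSf, Set.Finite.coe_toFinset]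
  -- pigeonhole: find j ∈ [1, M] with g₀^j not a "difference" of support elements
  set D : Finset G := (Sf ×ˢ Sf).image (fun st => st.1 * st.2⁻¹) with hD
  have hDcard : D.card ≤ (N + 1) ^ 2 := by
    calc D.card ≤ (Sf ×ˢ Sf).card := Finset.card_image_le
    _ = Sf.card * Sf.card := Finset.card_product _ _
    _ ≤ (N + 1) * (N + 1) := Nat.mul_le_mul hSfcard hSfcard
    _ = (N + 1) ^ 2 := (sq (N + 1)).symm
  have hex : ∃ j ∈ Finset.Icc 1 M, g₀ ^ j ∉ D := by
    by_contra hcon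
    push_neg at hcon
    have hsub : (Finset.Icc 1 M).image (fun j : ℕ => g₀ ^ j) ⊆ D := by
      intro x hx
      obtain ⟨j, hj, rfl⟩ := Finset.mem_image.1 hx
      exact hcon j hj
    have h1 : ((Finset.Icc 1 M).image (fun j : ℕ => g₀ ^ j)).card = M := by
      rw [Finset.card_image_of_injective _ hinj, Nat.card_Icc]; omega
    have h2 : M ≤ D.card := h1 ▸ Finset.card_le_card hsub
    omega
  obtain ⟨j, hjmem, hjD⟩ := hex
  -- apply almost equivariance at x₀
  have hle : n₀ j ≤ n := Finset.le_sup hjmem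
  have hdist : dist (f n x₀) (FJ.simSMulG N (g₀ ^ j) (f n x₀)) < 1/2 := by
    have := hn₀ j n hle x₀
    rwa [hfix j] at this
  set q : ↥(FJ.stdSimplex G N) := FJ.simSMulG N (g₀ ^ j) p with hqdef
  -- q's coordinates
  have hq : ∀ h : G, (q.1 : ∀ _ : G, ℝ) h = (p.1 : ∀ _ : G, ℝ) ((g₀ ^ j)⁻¹ * h) := fun h => rfl
  -- q vanishes on Sf
  have hqzero : ∀ h ∈ Sf, (q.1 : ∀ _ : G, ℝ) h = 0 := by
    intro h hh
    rw [hq]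
    by_contra hne
    have ht : (g₀ ^ j)⁻¹ * h ∈ Sf := (hSfmem _).2 hne
    apply hjD
    rw [hD]
    apply Finset.mem_image.2
    refine ⟨(h, (g₀ ^ j)⁻¹ * h), Finset.mem_product.2 ⟨hh, ht⟩, ?_⟩
    simp [mul_inv_rev]
  -- lower bound: dist p q ≥ 1
  set v : lp (fun _ : G => ℝ) 1 := p.1 - q.1 with hv
  have hvapp : ∀ h : G, (v : ∀ _ : G, ℝ) h = (p.1 : ∀ _ : G, ℝ) h - (q.1 : ∀ _ : G, ℝ) h := by
    intro h; rw [hv]; exact lp.coeFn_sub p.1 q.1 ▸ rfl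
  have hsummv : Summable fun h : G => ‖(v : ∀ _ : G, ℝ) h‖ := by
    have := (lp.memℓp v).summable (p := 1) (by norm_num)
    simpa using this
  have hnormv : ‖v‖ = ∑' h : G, ‖(v : ∀ _ : G, ℝ) h‖ := by
    have := lp.norm_eq_tsum_rpow (p := 1) (by norm_num) v
    simpa using this
  have hsum1 : ∑ h ∈ Sf, (p.1 : ∀ _ : G, ℝ) h = 1 := by
    rw [← hsum]
    exact (tsum_eq_sum (fun h hh => by_contra fun hne => hh ((hSfmem h).2 hne))).symm
  have hlow : (1 : ℝ) ≤ ‖v‖ := by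
    rw [hnormv, ← hsum1]
    have hstep : ∑ h ∈ Sf, (p.1 : ∀ _ : G, ℝ) h ≤ ∑ h ∈ Sf, ‖(v : ∀ _ : G, ℝ) h‖ := by
      apply Finset.sum_le_sum
      intro h hh
      rw [hvapp, hqzero h hh, sub_zero]
      exact le_abs_self _
    refine hstep.trans ?_
    exact Summable.sum_le_tsum Sf (fun h _ => norm_nonneg _) hsummv
  have hdq : dist p q = ‖v‖ := by
    rw [Subtype.dist_eq, dist_eq_norm, hv]
  rw [hdq] at hdist
  linarith
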